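/- High-probability excess-loss bound for the exponential mechanism on convex Lipschitz losses (equation (4) in the proof of Lemma 3.4, following the analysis of Bassily–Smith–Thakurta). There is a universal constant c > 0 such that the following holds. Let C ⊆ ℝ^p be a compact convex set with diameter ‖C‖ > 0 and positive Lebesgue measure, let F : C → ℝ be convex and L-Lipschitz on C, fix ε > 0 and n ≥ 1, and let μ be the Gibbs measure on C with density proportional to exp(−(εn/(2L‖C‖))·F(θ)). Then for every t ≥ 0, μ({θ ∈ C : F(θ) − min_{θ′∈C} F(θ′) > c·L‖C‖(p + t)/(2εn)}) ≤ 2^{−t}. -/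

import Mathlib

open MeasureTheory Real

noncomputable section

/-- ℝ^p as a Euclidean space. -/
abbrev Eu (p : ℕ) := EuclideanSpace ℝ (Fin p)

lemma pt_exp {β : ℝ} (hβ : 0 < β) (v : ℝ) :
    ENNReal.ofReal (Real.exp (-β * v)) =
      ∫⁻ u in Set.Ioi v, ENNReal.ofReal (β * Real.exp (-β * u)) := by
  have hint : IntegrableOn (fun u : ℝ => β * Real.exp (-β * u)) (Set.Ioi v) :=
    (exp_neg_integrableOn_Ioi v hβ).const_mul β
  have hreal : ∫ u in Set.Ioi v, β * Real.exp (-β * u) = Real.exp (-β * v) := by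
    have hderiv : ∀ x ∈ Set.Ici v, HasDerivAt (fun u : ℝ => -Real.exp (-β * u))
        (β * Real.exp (-β * x)) x := by
      intro x _
      have h1 : HasDerivAt (fun u : ℝ => -β * u) (-β) x := by
        simpa using (hasDerivAt_id x).const_mul (-β)
      have := (h1.exp).fun_neg
      exact this.congr_deriv (by ring)
    have htend : Filter.Tendsto (fun u : ℝ => -Real.exp (-β * u)) Filter.atTop (nhds (-0)) := by
      apply Filter.Tendsto.neg
      have h2 : Filter.Tendsto (fun u : ℝ => β * u) Filter.atTop Filter.atTop :=
        Filter.Tendsto.const_mul_atTop hβ Filter.tendsto_id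
      have h3 := Real.tendsto_exp_neg_atTop_nhds_zero.comp h2
      convert h3 using 2 with u
      simp [Function.comp, neg_mul]
    have := integral_Ioi_of_hasDerivAt_of_tendsto' (f := fun u : ℝ => -Real.exp (-β * u))
      (f' := fun u : ℝ => β * Real.exp (-β * u)) hderiv hint (by simpa using htend)
    simpa using this
  rw [← hreal, ← ofReal_integral_eq_lintegral_ofReal hint]
  exact Filter.Eventually.of_forall fun u => by positivity

lemma core_layer {p : ℕ} {g : Eu p → ℝ} (hg : Continuous g) {β : ℝ} (hβ : 0 < β)
    {E : Set (Eu p)} (hE : MeasurableSet E) (hgE : ∀ θ ∈ E, 0 ≤ g θ) :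
    ∫⁻ θ in E, ENNReal.ofReal (Real.exp (-β * g θ)) =
      ∫⁻ u in Set.Ioi (0:ℝ),
        ENNReal.ofReal (β * Real.exp (-β * u)) * volume ({θ | g θ < u} ∩ E) := by
  set w : ℝ → ENNReal := fun u => ENNReal.ofReal (β * Real.exp (-β * u)) with hw
  have wmeas : Measurable w :=
    ENNReal.measurable_ofReal.comp
      (continuous_const.mul (Real.continuous_exp.comp (continuous_const.mul continuous_id))).measurable
  have step1 : ∫⁻ θ in E, ENNReal.ofReal (Real.exp (-β * g θ)) =
      ∫⁻ θ in E, ∫⁻ u in Set.Ioi (0:ℝ), (Set.Ioi (g θ)).indicator w u := by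
    apply setLIntegral_congr_fun hE
    intro θ hθ
    beta_reduce
    rw [pt_exp hβ (g θ), lintegral_indicator measurableSet_Ioi,
      Measure.restrict_restrict measurableSet_Ioi, Set.Ioi_inter_Ioi,
      max_eq_left (hgE θ hθ)]
  rw [step1]
  have swap : ∫⁻ θ in E, ∫⁻ u in Set.Ioi (0:ℝ), (Set.Ioi (g θ)).indicator w u =
      ∫⁻ u in Set.Ioi (0:ℝ), ∫⁻ θ in E, (Set.Ioi (g θ)).indicator w u := by
    apply lintegral_lintegral_swap
    have : (Function.uncurry fun θ u => (Set.Ioi (g θ)).indicator w u) =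
        ({q : Eu p × ℝ | g q.1 < q.2}).indicator (fun q => w q.2) := by
      ext z
      by_cases h : g z.1 < z.2 <;>
        simp [Function.uncurry, Set.indicator_apply, h]
    rw [this]
    apply Measurable.aemeasurable
    apply Measurable.indicator (wmeas.comp measurable_snd)
    exact (isOpen_lt (hg.comp continuous_fst) continuous_snd).measurableSet
  rw [swap]
  apply setLIntegral_congr_fun measurableSet_Ioi
  intro u _
  have : ∀ θ : Eu p, (Set.Ioi (g θ)).indicator w u =
      ({θ' : Eu p | g θ' < u}).indicator (fun _ => w u) θ := by
    intro θ
    by_cases h : g θ < u <;> simp [Set.indicator_apply, h]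
  simp_rw [this]
  rw [lintegral_indicator (measurableSet_lt hg.measurable measurable_const),
    Measure.restrict_restrict (measurableSet_lt hg.measurable measurable_const),
    setLIntegral_const]

lemma scaling_lemma {p : ℕ} {C : Set (Eu p)} (hconv : Convex ℝ C) {g : Eu p → ℝ}
    (hg : ConvexOn ℝ C g) {θs : Eu p} (hθs : θs ∈ C) (h0 : g θs = 0)
    {lam : ℝ} (h0l : 0 < lam) (hl1 : lam ≤ 1) (u : ℝ) :
    ENNReal.ofReal (lam ^ p) * volume ({θ | g θ < u} ∩ C) ≤
      volume ({θ | g θ < lam * u} ∩ C) := by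
  set A := {θ | g θ < u} ∩ C with hA
  have hsub : AffineMap.homothety θs lam '' A ⊆ {θ | g θ < lam * u} ∩ C := by
    rintro y ⟨x, ⟨hxg, hxC⟩, rfl⟩
    have hy : AffineMap.homothety θs lam x = lam • x + (1 - lam) • θs := by
      rw [AffineMap.homothety_apply]
      simp only [vsub_eq_sub, vadd_eq_add]
      module
    rw [hy]
    constructor
    · have hb := hg.2 hxC hθs h0l.le (sub_nonneg.mpr hl1) (by ring : lam + (1 - lam) = 1)
      simp only [Set.mem_setOf_eq]
      calc g (lam • x + (1 - lam) • θs) ≤ lam * g x + (1 - lam) * g θs := hb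
        _ = lam * g x := by rw [h0]; simp
        _ < lam * u := by exact mul_lt_mul_of_pos_left hxg h0l
    · exact hconv hxC hθs h0l.le (sub_nonneg.mpr hl1) (by ring : lam + (1 - lam) = 1)
  calc ENNReal.ofReal (lam ^ p) * volume A
      = volume (AffineMap.homothety θs lam '' A) := by
        rw [Measure.addHaar_image_homothety, finrank_euclideanSpace_fin,
          abs_of_nonneg (pow_nonneg h0l.le p)]
    _ ≤ volume ({θ | g θ < lam * u} ∩ C) := measure_mono hsub

lemma gamma_lint {b : ℝ} (hb : 0 < b) (p : ℕ) :
    ∫⁻ u in Set.Ioi (0:ℝ), ENNReal.ofReal (u ^ p * Real.exp (-(b * u))) =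
      ENNReal.ofReal ((1/b) ^ ((p:ℝ)+1) * Real.Gamma ((p:ℝ)+1)) := by
  have hint : IntegrableOn (fun u : ℝ => u ^ p * Real.exp (-(b * u))) (Set.Ioi 0) := by
    have h := integrableOn_rpow_mul_exp_neg_mul_rpow (s := (p:ℝ)) (p := 1) (b := b)
      (lt_of_lt_of_le neg_one_lt_zero (Nat.cast_nonneg p)) one_pos hb
    refine h.congr_fun (fun x hx => ?_) measurableSet_Ioi
    beta_reduce
    rw [Real.rpow_one, Real.rpow_natCast, neg_mul]
  rw [← ofReal_integral_eq_lintegral_ofReal hint ?_]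
  · congr 1
    have h := Real.integral_rpow_mul_exp_neg_mul_Ioi (a := (p:ℝ)+1) (r := b)
      (by positivity) hb
    rw [← h]
    apply setIntegral_congr_fun measurableSet_Ioi
    intro u hu
    simp [Real.rpow_natCast]
  · filter_upwards [self_mem_ae_restrict (measurableSet_Ioi : MeasurableSet (Set.Ioi (0:ℝ)))]
    intro u hu
    have : (0:ℝ) < u := hu
    positivity

lemma key_real {pr t : ℝ} (hp : 1 ≤ pr) (ht : 0 ≤ t) :
    Real.exp (-(8*(pr+t))) * 2 ^ (pr+1) ≤ 2 ^ (-t) / 2 := by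
  have hexp : (2:ℝ) ^ (pr+t+2) ≤ Real.exp (8*(pr+t)) := by
    rw [Real.rpow_def_of_pos two_pos]
    apply Real.exp_le_exp.mpr
    have hlog : Real.log 2 ≤ 1 := by
      have := Real.log_le_sub_one_of_pos (by norm_num : (0:ℝ) < 2)
      linarith
    calc Real.log 2 * (pr+t+2) ≤ 1 * (pr+t+2) :=
          mul_le_mul_of_nonneg_right hlog (by linarith)
      _ ≤ 8*(pr+t) := by linarith
  have hid : (2:ℝ) ^ (pr+1) = 2 ^ (pr+t+2) * 2 ^ (-t) / 2 := by
    rw [← Real.rpow_add two_pos]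
    rw [eq_div_iff (by norm_num : (2:ℝ) ≠ 0)]
    nth_rewrite 2 [show (2:ℝ) = 2 ^ (1:ℝ) by rw [Real.rpow_one]]
    rw [← Real.rpow_add two_pos]
    congr 1
    ring
  rw [Real.exp_neg, inv_mul_le_iff₀ (Real.exp_pos _), hid, mul_div_assoc]
  exact mul_le_mul_of_nonneg_right hexp (by positivity)

lemma main_bound {p : ℕ} (hp : 1 ≤ p) {C : Set (Eu p)} (hC : MeasurableSet C)
    (hvol : 0 < volume C) (hvolfin : volume C < ⊤) (hCconv : Convex ℝ C)
    {g : Eu p → ℝ} (hgcont : Continuous g) (hgconv : ConvexOn ℝ C g)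
    {θs : Eu p} (hθs : θs ∈ C) (hg0 : g θs = 0) (hgnn : ∀ θ ∈ C, 0 ≤ g θ)
    {M : ℝ} (hM : 0 < M) (hgM : ∀ θ ∈ C, g θ ≤ M)
    {β a : ℝ} (hβ : 0 < β) (ha : 0 < a) (haM : a ≤ M) {t : ℝ} (ht : 0 ≤ t)
    (hba : β * a = 16 * ((p : ℝ) + t)) :
    ∫⁻ θ in {θ | a < g θ} ∩ C, ENNReal.ofReal (Real.exp (-β * g θ)) ≤
      ENNReal.ofReal ((2:ℝ) ^ (-t)) * ∫⁻ θ in C, ENNReal.ofReal (Real.exp (-β * g θ)) := by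
  classical
  set S : Set (Eu p) := {θ | a < g θ} ∩ C with hSdef
  have hSsub : S ⊆ C := Set.inter_subset_right
  have hSmeas : MeasurableSet S :=
    (measurableSet_lt measurable_const hgcont.measurable).inter hC
  set B : ENNReal := ENNReal.ofReal ((2:ℝ) ^ (-t)) with hB
  set Ng : ENNReal := ∫⁻ θ in S, ENNReal.ofReal (Real.exp (-β * g θ)) with hNg
  set Zg : ENNReal := ∫⁻ θ in C, ENNReal.ofReal (Real.exp (-β * g θ)) with hZg
  set T : ℝ → ENNReal := fun u => volume ({θ | g θ < u} ∩ C) with hT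
  set P : ENNReal := ENNReal.ofReal (a ^ p) with hP
  set Itop : ENNReal := ∫⁻ u in Set.Ioi a, ENNReal.ofReal (u ^ p * Real.exp (-β * u)) with hItop
  set Ibot : ENNReal :=
    ∫⁻ u in Set.Ioc 0 a, ENNReal.ofReal (u ^ p * Real.exp (-β * u)) with hIbot
  set Q : ENNReal := ENNReal.ofReal β * T a with hQ
  -- basic positivity/finiteness facts
  have hTa_fin : T a < ⊤ := lt_of_le_of_lt (measure_mono Set.inter_subset_right) hvolfin
  have hTa_pos : 0 < T a := by
    have hsc := scaling_lemma hCconv hgconv hθs hg0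
      (lam := a / (2 * M)) (by positivity)
      (by rw [div_le_one (by positivity)]; linarith) (2 * M)
    have heq : a / (2 * M) * (2 * M) = a := by field_simp
    have hfull : ({θ | g θ < 2 * M} ∩ C) = C := by
      apply Set.inter_eq_right.mpr
      intro θ hθ
      have := hgM θ hθ
      simp only [Set.mem_setOf_eq]
      linarith
    rw [heq, hfull] at hsc
    calc (0:ENNReal) < ENNReal.ofReal ((a / (2*M)) ^ p) * volume C := by
          apply ENNReal.mul_pos _ hvol.ne'
          simp only [ne_eq, ENNReal.ofReal_eq_zero, not_le]
          positivity
      _ ≤ T a := hsc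
  have hQ_ne0 : Q ≠ 0 :=
    mul_ne_zero (by simpa [ENNReal.ofReal_eq_zero, not_le] using hβ) hTa_pos.ne'
  have hQ_fin : Q ≠ ⊤ := ENNReal.mul_ne_top ENNReal.ofReal_ne_top hTa_fin.ne
  have hP_ne0 : P ≠ 0 := by
    simp only [hP, ne_eq, ENNReal.ofReal_eq_zero, not_le]
    positivity
  have hP_fin : P ≠ ⊤ := ENNReal.ofReal_ne_top
  -- layer-cake representations
  have hNg_eq : Ng = ∫⁻ u in Set.Ioi (0:ℝ),
      ENNReal.ofReal (β * Real.exp (-β * u)) * volume ({θ | g θ < u} ∩ S) :=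
    core_layer hgcont hβ hSmeas (fun θ hθ => hgnn θ hθ.2)
  have hZg_eq : Zg = ∫⁻ u in Set.Ioi (0:ℝ),
      ENNReal.ofReal (β * Real.exp (-β * u)) * T u :=
    core_layer hgcont hβ hC hgnn
  -- Step (1): P * Ng ≤ Q * Itop
  have hPNg : P * Ng ≤ Q * Itop := by
    rw [hNg_eq, ← lintegral_const_mul' _ _ hP_fin]
    have hsplitdom : Set.Ioc (0:ℝ) a ∪ Set.Ioi a = Set.Ioi 0 := Set.Ioc_union_Ioi_eq_Ioi ha.le
    rw [← hsplitdom, lintegral_union measurableSet_Ioi (Set.Ioc_disjoint_Ioi le_rfl)]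
    have hzero : ∫⁻ u in Set.Ioc (0:ℝ) a,
        P * (ENNReal.ofReal (β * Real.exp (-β * u)) * volume ({θ | g θ < u} ∩ S)) = 0 := by
      rw [← lintegral_zero (μ := volume.restrict (Set.Ioc (0:ℝ) a))]
      apply setLIntegral_congr_fun measurableSet_Ioc
      intro u hu
      have : {θ | g θ < u} ∩ S = ∅ := by
        apply Set.eq_empty_iff_forall_notMem.mpr
        rintro θ ⟨hgu, hau, -⟩
        have hu2 : u ≤ a := hu.2
        have hau' : a < g θ := hau
        simp only [Set.mem_setOf_eq] at hgu
        linarith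
      beta_reduce
      rw [this]
      simp
    rw [hzero, zero_add]
    have hmono : ∫⁻ u in Set.Ioi a,
        P * (ENNReal.ofReal (β * Real.exp (-β * u)) * volume ({θ | g θ < u} ∩ S)) ≤
        ∫⁻ u in Set.Ioi a, Q * ENNReal.ofReal (u ^ p * Real.exp (-β * u)) := by
      apply lintegral_mono_ae
      filter_upwards [ae_restrict_mem measurableSet_Ioi]
      intro u hu
      have hua : a < u := hu
      have hu0 : 0 < u := ha.trans hua
      have hvolS : volume ({θ | g θ < u} ∩ S) ≤ T u :=
        measure_mono (Set.inter_subset_inter_right _ hSsub)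
      have hsc := scaling_lemma hCconv hgconv hθs hg0
        (lam := a / u) (by positivity) (by rw [div_le_one hu0]; exact hua.le) u
      have heq : a / u * u = a := by field_simp
      rw [heq] at hsc
      have hkey : (a / u) ^ p * u ^ p = a ^ p := by
        rw [div_pow]
        exact div_mul_cancel₀ _ (pow_ne_zero p (ne_of_gt hu0))
      have hpowid : (a:ℝ) ^ p * (β * Real.exp (-β * u)) =
          (a / u) ^ p * (u ^ p * (β * Real.exp (-β * u))) := by
        rw [← hkey]; ring
      calc P * (ENNReal.ofReal (β * Real.exp (-β * u)) * volume ({θ | g θ < u} ∩ S))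
          ≤ P * (ENNReal.ofReal (β * Real.exp (-β * u)) * T u) := by
            exact mul_le_mul_right (mul_le_mul_right hvolS _) _
        _ = ENNReal.ofReal (a ^ p * (β * Real.exp (-β * u))) * T u := by
            rw [ENNReal.ofReal_mul (p := a ^ p) (by positivity), mul_assoc]
        _ = ENNReal.ofReal (u ^ p * (β * Real.exp (-β * u))) *
              (ENNReal.ofReal ((a / u) ^ p) * T u) := by
            rw [hpowid, ENNReal.ofReal_mul (p := (a / u) ^ p) (by positivity)]
            try ring
        _ ≤ ENNReal.ofReal (u ^ p * (β * Real.exp (-β * u))) * T a :=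
            mul_le_mul_right hsc _
        _ = Q * ENNReal.ofReal (u ^ p * Real.exp (-β * u)) := by
            rw [show u ^ p * (β * Real.exp (-β * u)) = β * (u ^ p * Real.exp (-β * u)) by ring,
              ENNReal.ofReal_mul (p := β) hβ.le, hQ]
            try ring
    calc (∫⁻ u in Set.Ioi a,
          P * (ENNReal.ofReal (β * Real.exp (-β * u)) * volume ({θ | g θ < u} ∩ S)))
        ≤ ∫⁻ u in Set.Ioi a, Q * ENNReal.ofReal (u ^ p * Real.exp (-β * u)) := hmono
      _ = Q * Itop := lintegral_const_mul' _ _ hQ_fin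
  -- Step (2): Q * Ibot ≤ P * Zg
  have hQZg : Q * Ibot ≤ P * Zg := by
    rw [hZg_eq, ← lintegral_const_mul' _ _ hP_fin, hIbot, ← lintegral_const_mul' _ _ hQ_fin]
    calc (∫⁻ u in Set.Ioc (0:ℝ) a, Q * ENNReal.ofReal (u ^ p * Real.exp (-β * u)))
        ≤ ∫⁻ u in Set.Ioc (0:ℝ) a,
            P * (ENNReal.ofReal (β * Real.exp (-β * u)) * T u) := by
          apply lintegral_mono_ae
          filter_upwards [ae_restrict_mem measurableSet_Ioc]
          intro u hu
          have hu0 : 0 < u := hu.1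
          have hua : u ≤ a := hu.2
          have hsc := scaling_lemma hCconv hgconv hθs hg0
            (lam := u / a) (by positivity) (by rw [div_le_one ha]; exact hua) a
          have heq : u / a * a = u := by field_simp
          rw [heq] at hsc
          have hkey : (u / a) ^ p * a ^ p = u ^ p := by
            rw [div_pow]
            exact div_mul_cancel₀ _ (pow_ne_zero p (ne_of_gt ha))
          have hpowid : (u:ℝ) ^ p * (β * Real.exp (-β * u)) =
              (u / a) ^ p * (a ^ p * (β * Real.exp (-β * u))) := by
            rw [← hkey]; ring
          calc Q * ENNReal.ofReal (u ^ p * Real.exp (-β * u))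
              = ENNReal.ofReal (u ^ p * (β * Real.exp (-β * u))) * T a := by
                rw [show u ^ p * (β * Real.exp (-β * u)) = β * (u ^ p * Real.exp (-β * u)) by
                  ring, ENNReal.ofReal_mul (p := β) hβ.le, hQ]
                try ring
            _ = ENNReal.ofReal (a ^ p * (β * Real.exp (-β * u))) *
                  (ENNReal.ofReal ((u / a) ^ p) * T a) := by
                rw [hpowid, ENNReal.ofReal_mul (p := (u / a) ^ p) (by positivity)]
                try ring
            _ ≤ ENNReal.ofReal (a ^ p * (β * Real.exp (-β * u))) * T u :=
                mul_le_mul_right hsc _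
            _ = P * (ENNReal.ofReal (β * Real.exp (-β * u)) * T u) := by
                rw [ENNReal.ofReal_mul (p := a ^ p) (by positivity), mul_assoc]
      _ ≤ ∫⁻ u in Set.Ioi (0:ℝ),
            P * (ENNReal.ofReal (β * Real.exp (-β * u)) * T u) :=
          lintegral_mono_set Set.Ioc_subset_Ioi_self
  -- Step (3): Itop ≤ B * Ibot
  set G : ℝ := Real.Gamma ((p:ℝ)+1) with hG
  have hGpos : 0 < G := Real.Gamma_pos_of_pos (by positivity)
  set Jr : ℝ := (1/β) ^ ((p:ℝ)+1) * G with hJr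
  set Hr : ℝ := (1/(β/2)) ^ ((p:ℝ)+1) * G with hHr
  have hJrpos : 0 < Jr := by
    apply mul_pos _ hGpos
    apply Real.rpow_pos_of_pos
    positivity
  have hHrpos : 0 < Hr := by
    apply mul_pos _ hGpos
    apply Real.rpow_pos_of_pos
    positivity
  have hJ : ∫⁻ u in Set.Ioi (0:ℝ), ENNReal.ofReal (u ^ p * Real.exp (-β * u)) =
      ENNReal.ofReal Jr := by
    have h := gamma_lint hβ p
    simp only [neg_mul] at h ⊢
    rw [hJr]
    exact h
  have hH : ∫⁻ u in Set.Ioi (0:ℝ), ENNReal.ofReal (u ^ p * Real.exp (-(β/2) * u)) =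
      ENNReal.ofReal Hr := by
    have h := gamma_lint (div_pos hβ two_pos) p
    simp only [neg_mul] at h ⊢
    rw [hHr]
    exact h
  have hsplit : Ibot + Itop = ENNReal.ofReal Jr := by
    rw [← hJ, ← Set.Ioc_union_Ioi_eq_Ioi ha.le,
      lintegral_union measurableSet_Ioi (Set.Ioc_disjoint_Ioi le_rfl)]
  have hbx : β * a / 2 = 8 * ((p:ℝ) + t) := by
    rw [hba]; ring
  have htop2 : Itop ≤ ENNReal.ofReal (Real.exp (-(8 * ((p:ℝ) + t))) * Hr) := by
    calc Itop ≤ ∫⁻ u in Set.Ioi a, ENNReal.ofReal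
          (Real.exp (-(8 * ((p:ℝ) + t))) * (u ^ p * Real.exp (-(β/2) * u))) := by
          apply lintegral_mono_ae
          filter_upwards [ae_restrict_mem measurableSet_Ioi]
          intro u hu
          have hua : a < u := hu
          have hu0 : 0 < u := ha.trans hua
          apply ENNReal.ofReal_le_ofReal
          have hdecomp : Real.exp (-β * u) =
              Real.exp (-(β/2) * u) * Real.exp (-(β/2) * u) := by
            rw [← Real.exp_add]; congr 1; ring
          have hmono2 : Real.exp (-(β/2) * u) ≤ Real.exp (-(8 * ((p:ℝ) + t))) := by
            apply Real.exp_le_exp.mpr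
            rw [← hbx]
            nlinarith
          calc u ^ p * Real.exp (-β * u)
              = (u ^ p * Real.exp (-(β/2) * u)) * Real.exp (-(β/2) * u) := by
                rw [hdecomp]; ring
            _ ≤ (u ^ p * Real.exp (-(β/2) * u)) * Real.exp (-(8 * ((p:ℝ) + t))) := by
                apply mul_le_mul_of_nonneg_left hmono2
                positivity
            _ = Real.exp (-(8 * ((p:ℝ) + t))) * (u ^ p * Real.exp (-(β/2) * u)) := by ring
      _ ≤ ∫⁻ u in Set.Ioi (0:ℝ), ENNReal.ofReal
            (Real.exp (-(8 * ((p:ℝ) + t))) * (u ^ p * Real.exp (-(β/2) * u))) :=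
          lintegral_mono_set (Set.Ioi_subset_Ioi ha.le)
      _ = ENNReal.ofReal (Real.exp (-(8 * ((p:ℝ) + t))) * Hr) := by
          simp_rw [ENNReal.ofReal_mul (Real.exp_nonneg _)]
          rw [lintegral_const_mul' _ _ ENNReal.ofReal_ne_top, hH,
            ← ENNReal.ofReal_mul (Real.exp_nonneg _)]
  have hHrJr : Hr = 2 ^ ((p:ℝ)+1) * Jr := by
    rw [hHr, hJr, show (1:ℝ)/(β/2) = 2 * (1/β) by field_simp,
      Real.mul_rpow (by norm_num) (by positivity)]
    ring
  have hq_half : Real.exp (-(8 * ((p:ℝ) + t))) * Hr ≤ (2:ℝ) ^ (-t) / 2 * Jr := by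
    rw [hHrJr, ← mul_assoc]
    apply mul_le_mul_of_nonneg_right _ hJrpos.le
    exact key_real (Nat.one_le_cast.mpr hp) ht
  have hq_Jr : Real.exp (-(8 * ((p:ℝ) + t))) * Hr ≤ Jr / 2 := by
    have h2t : (2:ℝ) ^ (-t) ≤ 1 :=
      Real.rpow_le_one_of_one_le_of_nonpos one_le_two (by linarith)
    calc Real.exp (-(8 * ((p:ℝ) + t))) * Hr ≤ (2:ℝ) ^ (-t) / 2 * Jr := hq_half
      _ ≤ 1 / 2 * Jr := by
          apply mul_le_mul_of_nonneg_right _ hJrpos.le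
          linarith
      _ = Jr / 2 := by ring
  have hItop_fin : Itop ≠ ⊤ :=
    ne_top_of_le_ne_top ENNReal.ofReal_ne_top htop2
  have hIbot_eq : Ibot = ENNReal.ofReal Jr - Itop :=
    ENNReal.eq_sub_of_add_eq hItop_fin hsplit
  have hIbot_ge : ENNReal.ofReal (Jr / 2) ≤ Ibot := by
    rw [hIbot_eq]
    calc ENNReal.ofReal (Jr / 2)
        ≤ ENNReal.ofReal (Jr - Real.exp (-(8 * ((p:ℝ) + t))) * Hr) := by
          apply ENNReal.ofReal_le_ofReal
          linarith
      _ = ENNReal.ofReal Jr - ENNReal.ofReal (Real.exp (-(8 * ((p:ℝ) + t))) * Hr) :=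
          ENNReal.ofReal_sub _ (by positivity)
      _ ≤ ENNReal.ofReal Jr - Itop := tsub_le_tsub_left htop2 _
  have hItop_le : Itop ≤ B * Ibot := by
    calc Itop ≤ ENNReal.ofReal (Real.exp (-(8 * ((p:ℝ) + t))) * Hr) := htop2
      _ ≤ ENNReal.ofReal ((2:ℝ) ^ (-t) * (Jr / 2)) := by
          apply ENNReal.ofReal_le_ofReal
          calc Real.exp (-(8 * ((p:ℝ) + t))) * Hr ≤ (2:ℝ) ^ (-t) / 2 * Jr := hq_half
            _ = (2:ℝ) ^ (-t) * (Jr / 2) := by ring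
      _ = B * ENNReal.ofReal (Jr / 2) := by
          rw [ENNReal.ofReal_mul (Real.rpow_nonneg (by norm_num) _)]
      _ ≤ B * Ibot := mul_le_mul_right hIbot_ge _
  -- Step (4): assembly
  have hIbot_pos : (0:ENNReal) < Ibot :=
    lt_of_lt_of_le (ENNReal.ofReal_pos.mpr (by positivity)) hIbot_ge
  have hIbot_fin : Ibot ≠ ⊤ := by
    apply ne_top_of_le_ne_top (ENNReal.ofReal_ne_top : ENNReal.ofReal Jr ≠ ⊤)
    calc Ibot ≤ Ibot + Itop := le_self_add
      _ = ENNReal.ofReal Jr := hsplit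
  have hK_ne0 : P * Q * Ibot ≠ 0 :=
    mul_ne_zero (mul_ne_zero hP_ne0 hQ_ne0) hIbot_pos.ne'
  have hK_fin : P * Q * Ibot ≠ ⊤ :=
    ENNReal.mul_ne_top (ENNReal.mul_ne_top hP_fin hQ_fin) hIbot_fin
  have h7 : (P * Q * Ibot) * Ng ≤ (P * Q * Ibot) * (B * Zg) := by
    calc (P * Q * Ibot) * Ng = (P * Ng) * (Q * Ibot) := by ring
      _ ≤ (Q * Itop) * (P * Zg) := mul_le_mul' hPNg hQZg
      _ ≤ (Q * (B * Ibot)) * (P * Zg) :=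
          mul_le_mul' (mul_le_mul_right hItop_le _) le_rfl
      _ = (P * Q * Ibot) * (B * Zg) := by ring
  exact (ENNReal.mul_le_mul_iff_right hK_ne0 hK_fin).mp h7



/-- The Gibbs measure on `C` with inverse temperature `β` for the potential `F`:
the probability measure whose density with respect to Lebesgue measure restricted
to `C` is proportional to `exp (-β * F θ)`. -/
def gibbs {p : ℕ} (C : Set (Eu p)) (β : ℝ) (F : Eu p → ℝ) : Measure (Eu p) :=
  (∫⁻ θ in C, ENNReal.ofReal (Real.exp (-β * F θ)))⁻¹ •
    (volume.restrict C).withDensity fun θ => ENNReal.ofReal (Real.exp (-β * F θ))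

/-- high-probability excess-loss bound for the exponential mechanism
on convex Lipschitz losses. -/
theorem exponential_mechanism_excess_loss_tail :
    ∃ c : ℝ, 0 < c ∧
      ∀ (p n : ℕ), 1 ≤ p → 1 ≤ n →
      ∀ (C : Set (Eu p)), IsCompact C → Convex ℝ C →
        0 < Metric.diam C → 0 < volume C →
      ∀ (F : Eu p → ℝ), ConvexOn ℝ C F →
      ∀ (L : ℝ), 0 < L → LipschitzOnWith L.toNNReal F C →
      ∀ (ε : ℝ), 0 < ε →
      ∀ (t : ℝ), 0 ≤ t →
        gibbs C (ε * n / (2 * L * Metric.diam C)) F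
            {θ | θ ∈ C ∧
              c * L * Metric.diam C * (p + t) / (2 * ε * n) < F θ - sInf (F '' C)} ≤
          ENNReal.ofReal ((2 : ℝ) ^ (-t)) := by
  refine ⟨64, by norm_num, ?_⟩
  intro p n hp hn C hCcomp hCconv hD hvol F hFconv L hL hFlip ε hε t ht
  have hCmeas : MeasurableSet C := hCcomp.measurableSet
  have hvolfin : volume C < ⊤ := hCcomp.measure_lt_top
  have hne : C.Nonempty := nonempty_of_measure_ne_zero hvol.ne'
  have hn' : (0:ℝ) < n := by exact_mod_cast Nat.lt_of_lt_of_le Nat.zero_lt_one hn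
  have hp' : (1:ℝ) ≤ p := by exact_mod_cast hp
  obtain ⟨F', hF'lip, hEqOn⟩ := hFlip.extend_real
  have hF'cont : Continuous F' := hF'lip.continuous
  obtain ⟨θs, hθsC, hminOn⟩ := hCcomp.exists_isMinOn hne hF'cont.continuousOn
  set m : ℝ := F' θs with hm
  have hmin : ∀ θ ∈ C, m ≤ F' θ := fun θ hθ => isMinOn_iff.mp hminOn θ hθ
  have hsInf : sInf (F '' C) = m := by
    rw [hEqOn.image_eq]
    exact IsLeast.csInf_eq ⟨⟨θs, hθsC, rfl⟩, fun y ⟨x, hx, hxy⟩ => hxy ▸ hmin x hx⟩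
  set g : Eu p → ℝ := fun θ => F' θ - m with hgdef
  have hgcont : Continuous g := hF'cont.sub continuous_const
  have hg0 : g θs = 0 := sub_self m
  have hgnn : ∀ θ ∈ C, 0 ≤ g θ := fun θ hθ => sub_nonneg.mpr (hmin θ hθ)
  have hgconv : ConvexOn ℝ C g := by
    refine ⟨hCconv, fun x hx y hy a b ha hb hab => ?_⟩
    have hmemxy : a • x + b • y ∈ C := hCconv hx hy ha hb hab
    simp only [hgdef, smul_eq_mul]
    have h1 : F' (a • x + b • y) = F (a • x + b • y) := (hEqOn hmemxy).symm
    have h2 := hFconv.2 hx hy ha hb hab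
    simp only [smul_eq_mul] at h2
    have h3 : F' x = F x := (hEqOn hx).symm
    have h4 : F' y = F y := (hEqOn hy).symm
    rw [h1, h3, h4]
    have e : a * F x + b * F y - m = a * (F x - m) + b * (F y - m) := by
      linear_combination m * hab
    linarith
  set D : ℝ := Metric.diam C with hDdef
  have hM : 0 < L * D := mul_pos hL hD
  have hgM : ∀ θ ∈ C, g θ ≤ L * D := by
    intro θ hθ
    have hdist := hFlip.dist_le_mul θ hθ θs hθsC
    have hcoe : (L.toNNReal : ℝ) = L := Real.coe_toNNReal _ hL.le
    rw [hcoe] at hdist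
    have hdd : dist θ θs ≤ D := Metric.dist_le_diam_of_mem hCcomp.isBounded hθ hθsC
    have habs : F θ - F θs ≤ L * dist θ θs := by
      calc F θ - F θs ≤ |F θ - F θs| := le_abs_self _
        _ = dist (F θ) (F θs) := (Real.dist_eq _ _).symm
        _ ≤ L * dist θ θs := hdist
    have : g θ = F θ - F θs := by
      simp only [hgdef, hm]
      rw [hEqOn hθ, hEqOn hθsC]
    rw [this]
    calc F θ - F θs ≤ L * dist θ θs := habs
      _ ≤ L * D := by exact mul_le_mul_of_nonneg_left hdd hL.le
  set β : ℝ := ε * n / (2 * L * Metric.diam C) with hβdef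
  have hβ : 0 < β := by
    rw [hβdef]
    have : (0:ℝ) < Metric.diam C := hD
    positivity
  set a : ℝ := 64 * L * Metric.diam C * ((p:ℝ) + t) / (2 * ε * n) with hadef
  have ha : 0 < a := by
    rw [hadef]
    have : (0:ℝ) < (p:ℝ) + t := by linarith
    have : (0:ℝ) < Metric.diam C := hD
    positivity
  have hba : β * a = 16 * ((p:ℝ) + t) := by
    rw [hβdef, hadef]
    have h1 : Metric.diam C ≠ 0 := ne_of_gt hD
    field_simp
    ring
  have hSeq : {θ | θ ∈ C ∧ a < F θ - sInf (F '' C)} = {θ | a < g θ} ∩ C := by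
    ext θ
    simp only [Set.mem_setOf_eq, Set.mem_inter_iff]
    constructor
    · rintro ⟨hθC, hlt⟩
      refine ⟨?_, hθC⟩
      rw [hsInf, hEqOn hθC] at hlt
      exact hlt
    · rintro ⟨hlt, hθC⟩
      refine ⟨hθC, ?_⟩
      rw [hsInf, hEqOn hθC]
      exact hlt
  by_cases hcase : L * D < a
  · have hS0 : {θ | θ ∈ C ∧ a < F θ - sInf (F '' C)} = ∅ := by
      rw [hSeq]
      apply Set.eq_empty_iff_forall_notMem.mpr
      rintro θ ⟨hlt, hθC⟩
      have h1 : g θ ≤ L * D := hgM θ hθC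
      have h2 : a < g θ := hlt
      linarith
    rw [hS0]
    simp only [measure_empty]
    exact zero_le
  · push_neg at hcase
    have hmain := main_bound hp hCmeas hvol hvolfin hCconv hgcont hgconv hθsC hg0 hgnn
      hM hgM hβ ha hcase ht hba
    -- rewrite the gibbs measure
    set S : Set (Eu p) := {θ | a < g θ} ∩ C with hSdef
    have hSmeas : MeasurableSet S :=
      (measurableSet_lt measurable_const hgcont.measurable).inter hCmeas
    set k : ENNReal := ENNReal.ofReal (Real.exp (-β * m)) with hk
    have hk0 : k ≠ 0 := by
      simp only [hk, ne_eq, ENNReal.ofReal_eq_zero, not_le]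
      exact Real.exp_pos _
    have hktop : k ≠ ⊤ := ENNReal.ofReal_ne_top
    have hfact : ∀ (E : Set (Eu p)), E ⊆ C → MeasurableSet E →
        ∫⁻ θ in E, ENNReal.ofReal (Real.exp (-β * F θ)) =
          k * ∫⁻ θ in E, ENNReal.ofReal (Real.exp (-β * g θ)) := by
      intro E hEC hEmeas
      rw [← lintegral_const_mul' _ _ hktop]
      apply setLIntegral_congr_fun hEmeas
      intro θ hθ
      beta_reduce
      rw [hk, ← ENNReal.ofReal_mul (Real.exp_nonneg _), ← Real.exp_add]
      congr 2
      simp only [hgdef]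
      rw [hEqOn (hEC hθ)]
      ring
    set Zg : ENNReal := ∫⁻ θ in C, ENNReal.ofReal (Real.exp (-β * g θ)) with hZgdef
    set Ng : ENNReal := ∫⁻ θ in S, ENNReal.ofReal (Real.exp (-β * g θ)) with hNgdef
    have hZg_fin : Zg ≠ ⊤ := by
      apply ne_top_of_le_ne_top hvolfin.ne
      calc Zg ≤ ∫⁻ _ in C, 1 := by
            apply lintegral_mono_ae
            filter_upwards [ae_restrict_mem hCmeas]
            intro θ hθ
            have h1 := hgnn θ hθ
            have h2 : Real.exp (-β * g θ) ≤ 1 := by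
              calc Real.exp (-β * g θ) ≤ Real.exp 0 := Real.exp_le_exp.mpr (by nlinarith)
                _ = 1 := Real.exp_zero
            calc ENNReal.ofReal (Real.exp (-β * g θ)) ≤ ENNReal.ofReal 1 :=
                  ENNReal.ofReal_le_ofReal h2
              _ = 1 := ENNReal.ofReal_one
        _ = volume C := setLIntegral_one _
    have hZg0 : Zg ≠ 0 := by
      have hlow : ENNReal.ofReal (Real.exp (-β * (L * D))) * volume C ≤ Zg := by
        rw [← setLIntegral_const]
        apply lintegral_mono_ae
        filter_upwards [ae_restrict_mem hCmeas]
        intro θ hθ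
        apply ENNReal.ofReal_le_ofReal
        apply Real.exp_le_exp.mpr
        have := hgM θ hθ
        nlinarith
      have hpos : (0:ENNReal) < ENNReal.ofReal (Real.exp (-β * (L * D))) * volume C := by
        apply ENNReal.mul_pos _ hvol.ne'
        simp only [ne_eq, ENNReal.ofReal_eq_zero, not_le]
        exact Real.exp_pos _
      exact (lt_of_lt_of_le hpos hlow).ne'
    have hgibbs : gibbs C β F {θ | θ ∈ C ∧ a < F θ - sInf (F '' C)} = Zg⁻¹ * Ng := by
      rw [hSeq, gibbs]
      rw [Measure.smul_apply, smul_eq_mul, withDensity_apply _ hSmeas,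
        Measure.restrict_restrict hSmeas]
      have hSC : S ∩ C = S := by rw [hSdef, Set.inter_assoc, Set.inter_self]
      rw [hSC, hfact C (le_refl _) hCmeas, hfact S Set.inter_subset_right hSmeas]
      rw [ENNReal.mul_inv (Or.inl hk0) (Or.inl hktop)]
      calc k⁻¹ * Zg⁻¹ * (k * Ng) = (k⁻¹ * k) * (Zg⁻¹ * Ng) := by ring
        _ = Zg⁻¹ * Ng := by rw [ENNReal.inv_mul_cancel hk0 hktop, one_mul]
    rw [hgibbs]
    calc Zg⁻¹ * Ng ≤ Zg⁻¹ * (ENNReal.ofReal ((2:ℝ) ^ (-t)) * Zg) :=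
          mul_le_mul_right hmain _
      _ = ENNReal.ofReal ((2:ℝ) ^ (-t)) * (Zg⁻¹ * Zg) := by ring
      _ = ENNReal.ofReal ((2:ℝ) ^ (-t)) := by
          rw [ENNReal.inv_mul_cancel hZg0 hZg_fin, mul_one]

end
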